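/- Let Σ ⊆ ℝⁿ be a closed set with 0 ∈ Σ. Let f : (ℝⁿ×ℝˡ,0) → (ℝᵖ,0) be a C² map satisfying the relative Kuo condition (K_{Σ,ω}^{r,δ}) with constants C, α, w̄ > 0, and let p : (ℝⁿ×ℝˡ,0) → (ℝᵖ,0) be a C¹ map with |∂p_i/∂x_j(u)| = o(d_ω(x,Σ)^r) for all 1 ≤ i ≤ p, 1 ≤ j ≤ n. For t ∈ [0,1] define F(u,t) = f(u) + t·p(u). Then there exist C′ > 0 and a neighborhood V ⊆ {u : ‖u‖ < α} of 0 such that for every t ∈ [0,1] and every u = (x,λ) ∈ V with x ∉ Σ and ‖f(u)‖ ≤ w̄·d_ω(x,Σ)^r, the Kuo pseudo-distance of F(·,t) satisfies d_{ω,x}∇F(·,t)(u) ≥ C′·d_ω(x,Σ)^{r−δ}. -/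

import Mathlib

noncomputable section

/-- The weighted quasi-norm on `ℝ^ι` with weights `ω`: `ρ_ω(u) = (Σ_i |u_i|^{2q_i})^{1/(2q)}`
with `q = ∏ ω_j`, `q_i = q/ω_i`. -/
def rhoW {ι : Type*} [Fintype ι] (ω : ι → ℝ) (u : ι → ℝ) : ℝ :=
  (∑ i, |u i| ^ (2 * (∏ j, ω j) / ω i)) ^ (1 / (2 * ∏ j, ω j))

/-- The weighted distance `d_ω(x,Σ) = inf_{y∈Σ} ρ_ω(x-y)` (formed with the first `n`
weights). -/
def dW {n : ℕ} (ω : Fin n → ℝ) (x : EuclideanSpace ℝ (Fin n))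
    (Sig : Set (EuclideanSpace ℝ (Fin n))) : ℝ :=
  ⨅ y : Sig, rhoW ω (fun i => x i - (y : EuclideanSpace ℝ (Fin n)) i)

/-- `ρ_ω` of a point `u = (x,λ) ∈ ℝⁿ×ℝˡ`, using all `n+l` weights. -/
def rhoU {n l : ℕ} (ω : Fin n ⊕ Fin l → ℝ)
    (u : EuclideanSpace ℝ (Fin n) × EuclideanSpace ℝ (Fin l)) : ℝ :=
  rhoW ω (Sum.elim (fun i => u.1 i) (fun i => u.2 i))

/-- The weighted gradient of the `i`-th component of `f` in the `x`-variables: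
`(∇_{ω,x}f_i(u))_j = ρ_ω(u)^{ω_j}·∂f_i/∂x_j(u)`. -/
def gradXW {n l p : ℕ} (ω : Fin n ⊕ Fin l → ℝ)
    (f : EuclideanSpace ℝ (Fin n) × EuclideanSpace ℝ (Fin l) → EuclideanSpace ℝ (Fin p))
    (i : Fin p) (u : EuclideanSpace ℝ (Fin n) × EuclideanSpace ℝ (Fin l)) :
    EuclideanSpace ℝ (Fin n) :=
  WithLp.toLp 2 (fun j => rhoU ω u ^ ω (Sum.inl j) * fderiv ℝ f u (EuclideanSpace.single j 1, 0) i)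

/-- `N(f,j,u)`: the weighted gradient `∇_{ω,x}f_j(u)` minus its orthogonal projection onto
the span of the other weighted gradients. -/
def NKW {n l p : ℕ} (ω : Fin n ⊕ Fin l → ℝ)
    (f : EuclideanSpace ℝ (Fin n) × EuclideanSpace ℝ (Fin l) → EuclideanSpace ℝ (Fin p))
    (j : Fin p) (u : EuclideanSpace ℝ (Fin n) × EuclideanSpace ℝ (Fin l)) :
    EuclideanSpace ℝ (Fin n) :=
  gradXW ω f j u - (Submodule.orthogonalProjectionOnto
    (Submodule.span ℝ ((fun i => gradXW ω f i u) '' {i | i ≠ j})) (gradXW ω f j u) :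
      EuclideanSpace ℝ (Fin n))

/-- The weighted Kuo pseudo-distance `d_{ω,x}∇f(u) = min_j ‖N(f,j,u)‖`. -/
def kuoDistW {n l p : ℕ} (ω : Fin n ⊕ Fin l → ℝ)
    (f : EuclideanSpace ℝ (Fin n) × EuclideanSpace ℝ (Fin l) → EuclideanSpace ℝ (Fin p))
    (u : EuclideanSpace ℝ (Fin n) × EuclideanSpace ℝ (Fin l)) : ℝ :=
  ⨅ j : Fin p, ‖NKW ω f j u‖

/- ### Auxiliary lemmas -/


lemma rhoW_nonneg {ι : Type*} [Fintype ι] (ω : ι → ℝ) (u : ι → ℝ) : 0 ≤ rhoW ω u :=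
  Real.rpow_nonneg (Finset.sum_nonneg fun _ _ => Real.rpow_nonneg (abs_nonneg _) _) _

lemma rhoW_eq_zero {ι : Type*} [Fintype ι] (ω : ι → ℝ) (hω : ∀ i, 0 < ω i) (u : ι → ℝ)
    (hu : ∀ i, u i = 0) : rhoW ω u = 0 := by
  have hq : 0 < ∏ j, ω j := Finset.prod_pos fun i _ => hω i
  unfold rhoW
  have h1 : ∀ i : ι, |u i| ^ (2 * (∏ j, ω j) / ω i) = 0 := by
    intro i
    rw [hu i, abs_zero]
    have := hω i
    exact Real.zero_rpow (by positivity)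
  rw [Finset.sum_congr rfl fun i _ => h1 i, Finset.sum_const, smul_zero]
  exact Real.zero_rpow (by positivity)

lemma rhoW_continuous {ι : Type*} [Fintype ι] (ω : ι → ℝ) (hω : ∀ i, 0 < ω i) :
    Continuous (rhoW ω) := by
  have hq : 0 < ∏ j, ω j := Finset.prod_pos fun i _ => hω i
  unfold rhoW
  apply (Real.continuous_rpow_const (by positivity)).comp
  refine continuous_finset_sum _ fun i _ => ?_
  have h2 : 0 ≤ 2 * (∏ j, ω j) / ω i := by have := hω i; positivity
  exact (Real.continuous_rpow_const h2).comp (continuous_abs.comp (continuous_apply i))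

lemma euclid_norm_le {n : ℕ} (x : EuclideanSpace ℝ (Fin n)) (a : ℝ) (ha : 0 ≤ a)
    (h : ∀ j, |x j| ≤ a) : ‖x‖ ≤ Real.sqrt n * a := by
  rw [EuclideanSpace.norm_eq]
  have h1 : ∀ j, ‖x j‖ ^ 2 ≤ a ^ 2 := fun j => by
    rw [Real.norm_eq_abs]
    exact pow_le_pow_left₀ (abs_nonneg _) (h j) 2
  calc Real.sqrt (∑ j, ‖x j‖ ^ 2) ≤ Real.sqrt (∑ _j : Fin n, a ^ 2) :=
        Real.sqrt_le_sqrt (Finset.sum_le_sum fun j _ => h1 j)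
    _ = Real.sqrt ((n : ℝ) * a ^ 2) := by
        rw [Finset.sum_const, Finset.card_univ, Fintype.card_fin, nsmul_eq_mul]
    _ = Real.sqrt n * a := by
        rw [Real.sqrt_mul (Nat.cast_nonneg n), Real.sqrt_sq ha]

lemma span_perturb {E : Type*} [NormedAddCommGroup E] [NormedSpace ℝ E] {p : ℕ} (hp : 0 < p)
    (s g : Fin p → E) (d : ℝ) (hd0 : 0 ≤ d)
    (hd : ∀ k : Fin p, ∀ v ∈ Submodule.span ℝ (s '' {i | i ≠ k}), d ≤ ‖s k - v‖)
    (he : ∀ i, ‖g i - s i‖ ≤ d / (4 * p))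
    (j : Fin p) (v : E) (hv : v ∈ Submodule.span ℝ (g '' {i | i ≠ j})) :
    d / 2 ≤ ‖g j - v‖ := by
  classical
  set e : Fin p → E := fun i => g i - s i with hedef
  have hppos : (0 : ℝ) < p := by exact_mod_cast hp
  obtain ⟨l, hls, hlv⟩ := (Finsupp.mem_span_image_iff_linearCombination ℝ).1 hv
  set c : Fin p → ℝ := ⇑l with hc
  have hcj : c j = 0 := by
    by_contra h
    exact ((Finsupp.mem_supported ℝ l).1 hls (Finsupp.mem_support_iff.2 h)) rfl
  have hv' : v = ∑ i, c i • g i := by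
    rw [← hlv, Finsupp.linearCombination_apply, Finsupp.sum_fintype]
    intro i; simp
  have hmem : ∀ (k i : Fin p), i ≠ k → s i ∈ Submodule.span ℝ (s '' {i | i ≠ k}) :=
    fun k i hik => Submodule.subset_span ⟨i, hik, rfl⟩
  have hsum_mem : (∑ i, c i • s i) ∈ Submodule.span ℝ (s '' {i | i ≠ j}) := by
    refine Submodule.sum_mem _ fun i _ => ?_
    by_cases hij : i = j
    · subst hij; rw [hcj, zero_smul]; exact Submodule.zero_mem _
    · exact Submodule.smul_mem _ _ (hmem j i hij)
  set M : ℝ := ‖s j - ∑ i, c i • s i‖ with hM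
  have hdM : d ≤ M := hd j _ hsum_mem
  have hM0 : (0 : ℝ) ≤ M := norm_nonneg _
  have hck : ∀ k, |c k| * d ≤ M := by
    intro k
    by_cases hkj : k = j
    · subst hkj; rw [hcj]; simpa using hM0
    by_cases hck0 : c k = 0
    · rw [hck0]; simpa using hM0
    set w : E := (c k)⁻¹ • (s j - ∑ i ∈ Finset.univ.erase k, c i • s i) with hw
    have hwmem : w ∈ Submodule.span ℝ (s '' {i | i ≠ k}) := by
      refine Submodule.smul_mem _ _ (Submodule.sub_mem _ (hmem k j fun h => hkj h.symm) ?_)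
      exact Submodule.sum_mem _ fun i hi =>
        Submodule.smul_mem _ _ (hmem k i (Finset.ne_of_mem_erase hi))
    have key : s j - ∑ i, c i • s i = (-(c k)) • (s k - w) := by
      rw [hw, smul_sub, smul_smul]
      have h1 : -c k * (c k)⁻¹ = -1 := by field_simp
      rw [h1, neg_smul, neg_smul, one_smul, sub_neg_eq_add]
      rw [← Finset.sum_erase_add Finset.univ _ (Finset.mem_univ k)]
      abel
    calc |c k| * d ≤ |c k| * ‖s k - w‖ :=
          mul_le_mul_of_nonneg_left (hd k w hwmem) (abs_nonneg _)
      _ = ‖(-(c k)) • (s k - w)‖ := by rw [norm_smul, Real.norm_eq_abs, abs_neg]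
      _ = M := by rw [hM, key]
  have hpos4p : (0 : ℝ) < 4 * p := by positivity
  have hsum_e : ‖∑ i, c i • e i‖ ≤ M / 4 := by
    calc ‖∑ i, c i • e i‖ ≤ ∑ i, ‖c i • e i‖ := norm_sum_le _ _
      _ = ∑ i, |c i| * ‖e i‖ := by simp [norm_smul]
      _ ≤ ∑ _i : Fin p, M / (4 * p) := by
          refine Finset.sum_le_sum fun i _ => ?_
          calc |c i| * ‖e i‖ ≤ |c i| * (d / (4 * p)) :=
                mul_le_mul_of_nonneg_left (he i) (abs_nonneg _)
            _ = (|c i| * d) / (4 * p) := by ring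
            _ ≤ M / (4 * p) := (div_le_div_iff_of_pos_right hpos4p).2 (hck i)
      _ = (p : ℝ) * (M / (4 * p)) := by
          rw [Finset.sum_const, Finset.card_univ, Fintype.card_fin, nsmul_eq_mul]
      _ = M / 4 := by field_simp
  have hej : ‖e j‖ ≤ d / 4 := by
    refine (he j).trans ?_
    have h1 : (1 : ℝ) ≤ p := by exact_mod_cast hp
    apply div_le_div_of_nonneg_left hd0 (by norm_num)
    linarith
  have hrepr : g j - v = (s j - ∑ i, c i • s i) + (e j - ∑ i, c i • e i) := by
    rw [hv', hedef]
    simp only [smul_sub]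
    rw [Finset.sum_sub_distrib]
    abel
  have hlow : M - ‖e j - ∑ i, c i • e i‖ ≤ ‖g j - v‖ := by
    have h2 : M ≤ ‖g j - v‖ + ‖e j - ∑ i, c i • e i‖ := by
      have h4 : s j - ∑ i, c i • s i = (g j - v) - (e j - ∑ i, c i • e i) := by
        rw [hrepr]; abel
      calc M = ‖(g j - v) - (e j - ∑ i, c i • e i)‖ := by rw [hM, h4]
        _ ≤ ‖g j - v‖ + ‖e j - ∑ i, c i • e i‖ := norm_sub_le _ _
    linarith
  have h3 : ‖e j - ∑ i, c i • e i‖ ≤ d / 4 + M / 4 :=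
    (norm_sub_le _ _).trans (add_le_add hej hsum_e)
  linarith

lemma kuoDistW_le_norm {n l p : ℕ} (ω : Fin n ⊕ Fin l → ℝ)
    (f : EuclideanSpace ℝ (Fin n) × EuclideanSpace ℝ (Fin l) → EuclideanSpace ℝ (Fin p))
    (u : EuclideanSpace ℝ (Fin n) × EuclideanSpace ℝ (Fin l)) (k : Fin p) :
    kuoDistW ω f u ≤ ‖NKW ω f k u‖ := by
  haveI : Nonempty (Fin p) := ⟨k⟩
  exact ciInf_le ⟨0, by rintro x ⟨j', rfl⟩; exact norm_nonneg _⟩ k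

lemma kuoDistW_nonneg {n l p : ℕ} (ω : Fin n ⊕ Fin l → ℝ)
    (f : EuclideanSpace ℝ (Fin n) × EuclideanSpace ℝ (Fin l) → EuclideanSpace ℝ (Fin p))
    (u : EuclideanSpace ℝ (Fin n) × EuclideanSpace ℝ (Fin l)) :
    0 ≤ kuoDistW ω f u :=
  Real.iInf_nonneg fun _ => norm_nonneg _

lemma norm_NKW_le {n l p : ℕ} (ω : Fin n ⊕ Fin l → ℝ)
    (f : EuclideanSpace ℝ (Fin n) × EuclideanSpace ℝ (Fin l) → EuclideanSpace ℝ (Fin p))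
    (u : EuclideanSpace ℝ (Fin n) × EuclideanSpace ℝ (Fin l)) (k : Fin p)
    (v : EuclideanSpace ℝ (Fin n))
    (hv : v ∈ Submodule.span ℝ ((fun i => gradXW ω f i u) '' {i | i ≠ k})) :
    ‖NKW ω f k u‖ ≤ ‖gradXW ω f k u - v‖ := by
  unfold NKW
  rw [← Submodule.starProjection_apply, Submodule.starProjection_minimal]
  exact ciInf_le ⟨0, by rintro x ⟨y, rfl⟩; exact norm_nonneg _⟩
    (⟨v, hv⟩ : Submodule.span ℝ ((fun i => gradXW ω f i u) '' {i | i ≠ k}))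


/-- Lemma 3.2: if `f` is `C²` and satisfies the relative Kuo condition
`(K_{Σ,ω}^{r,δ})` with constants `C, α, w̄`, and `p` is `C¹` with
`|∂p_i/∂x_j| = o(d_ω(x,Σ)^r)`, then setting `F(u,t) = f(u) + t·p(u)` there are `C′ > 0`
and a neighborhood `V ⊆ {‖u‖ < α}` of `0` such that for all `t ∈ [0,1]` and all
`u = (x,λ) ∈ V` with `x ∉ Σ` and `‖f(u)‖ ≤ w̄·d_ω(x,Σ)^r`, one has
`d_{ω,x}∇F(·,t)(u) ≥ C′·d_ω(x,Σ)^{r-δ}`. -/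
theorem kuoDistW_perturbation_bound {n l p : ℕ}
    (ω : Fin n ⊕ Fin l → ℝ) (hω : ∀ i, 0 < ω i)
    (Sig : Set (EuclideanSpace ℝ (Fin n))) (hSc : IsClosed Sig) (h0S : (0 : _) ∈ Sig)
    (f : EuclideanSpace ℝ (Fin n) × EuclideanSpace ℝ (Fin l) → EuclideanSpace ℝ (Fin p))
    (hf : ContDiff ℝ 2 f) (hf0 : f 0 = 0)
    (r δ C α w : ℝ) (hr : 0 < r) (hδ : 0 < δ) (hC : 0 < C) (hα : 0 < α) (hw : 0 < w)
    (hKuo : ∀ u : EuclideanSpace ℝ (Fin n) × EuclideanSpace ℝ (Fin l), ‖u‖ < α →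
      ‖f u‖ ≤ w * dW (fun i => ω (Sum.inl i)) u.1 Sig ^ r →
      C * dW (fun i => ω (Sum.inl i)) u.1 Sig ^ (r - δ) ≤ kuoDistW ω f u)
    (P : EuclideanSpace ℝ (Fin n) × EuclideanSpace ℝ (Fin l) → EuclideanSpace ℝ (Fin p))
    (hP : ContDiff ℝ 1 P) (hP0 : P 0 = 0)
    (hPd : ∀ ε > (0 : ℝ),
      ∃ U ∈ nhds (0 : EuclideanSpace ℝ (Fin n) × EuclideanSpace ℝ (Fin l)), ∀ u ∈ U,
        ∀ i j, |fderiv ℝ P u (EuclideanSpace.single j 1, 0) i| ≤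
          ε * dW (fun i => ω (Sum.inl i)) u.1 Sig ^ r) :
    ∃ C' > (0 : ℝ),
      ∃ V ∈ nhds (0 : EuclideanSpace ℝ (Fin n) × EuclideanSpace ℝ (Fin l)),
        V ⊆ {u | ‖u‖ < α} ∧
        ∀ t ∈ Set.Icc (0 : ℝ) 1,
          ∀ u ∈ V, u.1 ∉ Sig → ‖f u‖ ≤ w * dW (fun i => ω (Sum.inl i)) u.1 Sig ^ r →
            C' * dW (fun i => ω (Sum.inl i)) u.1 Sig ^ (r - δ) ≤
              kuoDistW ω (fun v => f v + t • P v) u := by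
  classical
  have hball : {u : EuclideanSpace ℝ (Fin n) × EuclideanSpace ℝ (Fin l) | ‖u‖ < α}
      ∈ nhds (0 : EuclideanSpace ℝ (Fin n) × EuclideanSpace ℝ (Fin l)) := by
    have h1 := Metric.ball_mem_nhds (0 : EuclideanSpace ℝ (Fin n) × EuclideanSpace ℝ (Fin l)) hα
    have h2 : Metric.ball (0 : EuclideanSpace ℝ (Fin n) × EuclideanSpace ℝ (Fin l)) α
        = {u | ‖u‖ < α} := by
      ext u; simp [Metric.mem_ball, dist_zero_right]
    rwa [h2] at h1
  by_cases hp0 : p = 0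
  · subst hp0
    refine ⟨C, hC, {u | ‖u‖ < α}, hball, subset_rfl, fun t ht u hu hx hfb => ?_⟩
    have h1 := hKuo u hu hfb
    have h2 : kuoDistW ω f u = 0 := Real.iInf_of_isEmpty _
    have h3 : kuoDistW ω (fun v => f v + t • P v) u = 0 := Real.iInf_of_isEmpty _
    rw [h3]; rw [h2] at h1; exact h1
  have hp : 0 < p := Nat.pos_of_ne_zero hp0
  have hppos : (0 : ℝ) < p := by exact_mod_cast hp
  haveI : Nonempty (Fin p) := ⟨⟨0, hp⟩⟩
  have hs0 : (0 : ℝ) ≤ Real.sqrt n := Real.sqrt_nonneg _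
  set ε : ℝ := C / ((Real.sqrt n + 1) * (4 * p)) with hε
  have hεpos : 0 < ε := by positivity
  obtain ⟨U, hU, hUb⟩ := hPd ε hεpos
  -- neighborhood where `rhoU ω u < 1`
  have hcont1 : ContinuousAt (rhoU ω) 0 := by
    apply Continuous.continuousAt
    apply (rhoW_continuous ω hω).comp
    refine continuous_pi fun i => ?_
    cases i with
    | inl j => exact (EuclideanSpace.proj j).continuous.comp continuous_fst
    | inr j => exact (EuclideanSpace.proj j).continuous.comp continuous_snd
  have hrhoU0 : rhoU ω 0 = 0 := rhoW_eq_zero ω hω _ (by rintro (i | i) <;> rfl)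
  have hV1 : {u : EuclideanSpace ℝ (Fin n) × EuclideanSpace ℝ (Fin l) | rhoU ω u < 1}
      ∈ nhds 0 := by
    have hmem : Set.Iio (1 : ℝ) ∈ nhds (rhoU ω 0) := by
      rw [hrhoU0]; exact Iio_mem_nhds one_pos
    have := hcont1.preimage_mem_nhds hmem
    simpa [Set.preimage, Set.mem_Iio] using this
  -- neighborhood where `rhoW ωn u.1 < 1`
  have hcont2 : ContinuousAt
      (fun u : EuclideanSpace ℝ (Fin n) × EuclideanSpace ℝ (Fin l) =>
        rhoW (fun i => ω (Sum.inl i)) (fun i => u.1 i)) 0 := by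
    apply Continuous.continuousAt
    apply (rhoW_continuous _ fun i => hω _).comp
    exact continuous_pi fun i => (EuclideanSpace.proj i).continuous.comp continuous_fst
  have hV2 : {u : EuclideanSpace ℝ (Fin n) × EuclideanSpace ℝ (Fin l) |
      rhoW (fun i => ω (Sum.inl i)) (fun i => u.1 i) < 1} ∈ nhds 0 := by
    have h0 : rhoW (fun i => ω (Sum.inl i))
        (fun i => ((0 : EuclideanSpace ℝ (Fin n) × EuclideanSpace ℝ (Fin l)).1 i)) = 0 :=
      rhoW_eq_zero _ (fun i => hω _) _ (fun i => rfl)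
    have hmem : Set.Iio (1 : ℝ) ∈ nhds (rhoW (fun i => ω (Sum.inl i))
        (fun i => ((0 : EuclideanSpace ℝ (Fin n) × EuclideanSpace ℝ (Fin l)).1 i))) := by
      rw [h0]; exact Iio_mem_nhds one_pos
    have := hcont2.preimage_mem_nhds hmem
    simpa [Set.preimage, Set.mem_Iio] using this
  refine ⟨C / 2, by positivity,
    {u | ‖u‖ < α} ∩ ({u | rhoU ω u < 1} ∩
      ({u | rhoW (fun i => ω (Sum.inl i)) (fun i => u.1 i) < 1} ∩ U)),
    Filter.inter_mem hball (Filter.inter_mem hV1 (Filter.inter_mem hV2 hU)),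
    Set.inter_subset_left, ?_⟩
  rintro t ⟨ht0, ht1⟩ u ⟨hu1, hu2, hu3, hu4⟩ hx hfb
  set d : ℝ := dW (fun i => ω (Sum.inl i)) u.1 Sig with hd
  have hd0 : 0 ≤ d := Real.iInf_nonneg fun y => rhoW_nonneg _ _
  have hd1 : d ≤ 1 := by
    have hb : BddBelow (Set.range fun y : Sig =>
        rhoW (fun i => ω (Sum.inl i)) fun i => u.1 i - (y : EuclideanSpace ℝ (Fin n)) i) :=
      ⟨0, by rintro x ⟨y, rfl⟩; exact rhoW_nonneg _ _⟩
    have h2 : d ≤ rhoW (fun i => ω (Sum.inl i))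
        (fun i => u.1 i - ((⟨0, h0S⟩ : Sig) : EuclideanSpace ℝ (Fin n)) i) :=
      ciInf_le hb (⟨0, h0S⟩ : Sig)
    have h3 : (fun i => u.1 i - ((⟨0, h0S⟩ : Sig) : EuclideanSpace ℝ (Fin n)) i)
        = fun i => u.1 i := by
      funext i; simp
    rw [h3] at h2
    exact h2.trans hu3.le
  have hKf := hKuo u hu1 hfb
  rw [← hd] at hKf
  have hdf0 : 0 ≤ kuoDistW ω f u := kuoDistW_nonneg ω f u
  set F : EuclideanSpace ℝ (Fin n) × EuclideanSpace ℝ (Fin l) → EuclideanSpace ℝ (Fin p) :=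
    fun v => f v + t • P v with hF
  have hfderiv : fderiv ℝ F u = fderiv ℝ f u + t • fderiv ℝ P u := by
    have h1 : DifferentiableAt ℝ f u :=
      (hf.differentiable (by norm_num)).differentiableAt
    have h2 : DifferentiableAt ℝ P u := (hP.differentiable one_ne_zero).differentiableAt
    rw [hF, fderiv_fun_add (g := fun v => t • P v) h1 (h2.const_smul t), fderiv_fun_const_smul h2 t]
  have hρ : rhoU ω u ≤ 1 := hu2.le
  -- entrywise bound on the perturbation of the weighted gradients
  have hent : ∀ (i : Fin p) (jx : Fin n),
      |gradXW ω F i u jx - gradXW ω f i u jx| ≤ ε * d ^ r := by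
    intro i jx
    have hgf : gradXW ω F i u jx - gradXW ω f i u jx
        = rhoU ω u ^ ω (Sum.inl jx) *
          (t * fderiv ℝ P u (EuclideanSpace.single jx 1, 0) i) := by
      simp only [gradXW, hfderiv, ContinuousLinearMap.add_apply,
        ContinuousLinearMap.coe_smul', Pi.smul_apply, PiLp.add_apply, PiLp.smul_apply,
        smul_eq_mul, PiLp.toLp_apply]
      ring
    rw [hgf, abs_mul, abs_mul]
    have hρ0 : 0 ≤ rhoU ω u ^ ω (Sum.inl jx) := Real.rpow_nonneg (rhoW_nonneg _ _) _
    have hρ1 : rhoU ω u ^ ω (Sum.inl jx) ≤ 1 :=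
      Real.rpow_le_one (rhoW_nonneg _ _) hρ (hω _).le
    rw [abs_of_nonneg hρ0]
    have hdB := hUb u hu4 i jx
    have hdrpow : 0 ≤ d ^ r := Real.rpow_nonneg hd0 r
    calc rhoU ω u ^ ω (Sum.inl jx) *
        (|t| * |fderiv ℝ P u (EuclideanSpace.single jx 1, 0) i|)
        ≤ 1 * (1 * (ε * d ^ r)) := by
          refine mul_le_mul hρ1 ?_ (by positivity) zero_le_one
          refine mul_le_mul ?_ hdB (abs_nonneg _) zero_le_one
          rw [abs_of_nonneg ht0]; exact ht1
      _ = ε * d ^ r := by ring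
  -- d^r ≤ d^(r-δ)
  have hdr_le : d ^ r ≤ d ^ (r - δ) := by
    rcases eq_or_lt_of_le hd0 with h0 | h0
    · rw [← h0, Real.zero_rpow hr.ne']
      exact Real.rpow_nonneg le_rfl _
    · exact Real.rpow_le_rpow_of_exponent_ge h0 hd1 (by linarith)
  have hεsq : Real.sqrt n * ε ≤ C / (4 * p) := by
    have h5 : Real.sqrt n / (Real.sqrt n + 1) ≤ 1 := by
      rw [div_le_one (by positivity)]; linarith
    calc Real.sqrt n * ε = (Real.sqrt n / (Real.sqrt n + 1)) * (C / (4 * p)) := by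
          rw [hε]; field_simp
      _ ≤ 1 * (C / (4 * p)) := mul_le_mul_of_nonneg_right h5 (by positivity)
      _ = C / (4 * p) := one_mul _
  have hdrd0 : 0 ≤ d ^ (r - δ) := Real.rpow_nonneg hd0 _
  have he : ∀ i, ‖gradXW ω F i u - gradXW ω f i u‖ ≤ kuoDistW ω f u / (4 * p) := by
    intro i
    have h1 : ‖gradXW ω F i u - gradXW ω f i u‖ ≤ Real.sqrt n * (ε * d ^ r) := by
      refine euclid_norm_le _ _ (by positivity) fun jx => ?_
      have := hent i jx
      simpa [PiLp.sub_apply] using this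
    have hpos4p : (0 : ℝ) < 4 * p := by positivity
    calc ‖gradXW ω F i u - gradXW ω f i u‖ ≤ Real.sqrt n * (ε * d ^ r) := h1
      _ = (Real.sqrt n * ε) * d ^ r := by ring
      _ ≤ (C / (4 * p)) * d ^ (r - δ) :=
          mul_le_mul hεsq hdr_le (Real.rpow_nonneg hd0 _) (by positivity)
      _ = (C * d ^ (r - δ)) / (4 * p) := by ring
      _ ≤ kuoDistW ω f u / (4 * p) := (div_le_div_iff_of_pos_right hpos4p).2 hKf
  have hd_bound : ∀ k : Fin p, ∀ v ∈ Submodule.span ℝ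
      ((fun i => gradXW ω f i u) '' {i | i ≠ k}), kuoDistW ω f u ≤ ‖gradXW ω f k u - v‖ :=
    fun k v hv => (kuoDistW_le_norm ω f u k).trans (norm_NKW_le ω f u k v hv)
  have hfin : ∀ j : Fin p, C / 2 * d ^ (r - δ) ≤ ‖NKW ω F j u‖ := by
    intro j
    have hmemproj := SetLike.coe_mem (Submodule.orthogonalProjectionOnto
      (Submodule.span ℝ ((fun i => gradXW ω F i u) '' {i | i ≠ j})) (gradXW ω F j u))
    have h6 := span_perturb hp (fun i => gradXW ω f i u) (fun i => gradXW ω F i u)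
      (kuoDistW ω f u) hdf0 hd_bound he j _ hmemproj
    have h7 : C / 2 * d ^ (r - δ) ≤ kuoDistW ω f u / 2 := by linarith
    exact h7.trans h6
  exact le_ciInf hfin


end
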